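/- Let (Z,S) be an aperiodic zero-dimensional system and N ≥ 1. Suppose U_1,…,U_m are clopen sets covering Z with U_i ∩ S^k U_i = ∅ for all 1 ≤ i ≤ m and 1 ≤ k ≤ N. Define V_1 = U_1 and V_{l+1} = V_l ∪ (U_{l+1} \ ⋃_{i=-N}^{N} S^i V_l). Then for all 1 ≤ l ≤ m: V_l ∩ S^k V_l = ∅ for 1 ≤ k ≤ N, and U_1 ∪ ⋯ ∪ U_l ⊆ ⋃_{k=-N}^{N} S^k V_l. -/

import Mathlib

open scoped ENNReal NNReal
open Set Function Filter Topology

/-- The `n`-th iterate (`n ∈ ℤ`) of a homeomorphism. -/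
noncomputable def hIter {X : Type*} [TopologicalSpace X] (T : X ≃ₜ X) (n : ℤ) (x : X) : X :=
  if 0 ≤ n then (⇑T)^[n.toNat] x else (⇑T.symm)^[(-n).toNat] x

/-- `WidimLE d ε n`: there is a finite open cover of mesh `< ε` (w.r.t. the distance
function `d`) and of order `≤ n`, i.e. every point lies in at most `n+1` members
(equivalently any `n+2` distinct members have empty intersection). -/
def WidimLE {X : Type*} [TopologicalSpace X] (d : X → X → ℝ) (ε : ℝ) (n : ℕ) : Prop :=
  ∃ (N : ℕ) (U : Fin N → Set X),
    (∀ i, IsOpen (U i)) ∧ (⋃ i, U i) = Set.univ ∧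
    (∀ i, ∀ x ∈ U i, ∀ y ∈ U i, d x y < ε) ∧
    (∀ x : X, ({i | x ∈ U i} : Set (Fin N)).ncard ≤ n + 1)

/-- `widim d ε` : the ε-width dimension with respect to the distance function `d`. -/
noncomputable def widim {X : Type*} [TopologicalSpace X] (d : X → X → ℝ) (ε : ℝ) : ℝ≥0∞ :=
  sInf {c : ℝ≥0∞ | ∃ n : ℕ, c = n ∧ WidimLE d ε n}

/-- `dynDist T n` is the dynamical distance `d_0^{n-1}(x,y) = max_{0 ≤ i < n} d(T^i x, T^i y)`. -/
noncomputable def dynDist {X : Type*} [PseudoMetricSpace X] (T : X → X) (n : ℕ) (x y : X) : ℝ :=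
  (((Finset.range n).sup fun i => nndist (T^[i] x) (T^[i] y)) : ℝ≥0)

/-- Mean dimension `mdim(X,T) = sup_{ε>0} lim_n widim_ε(X, d_0^{n-1})/n`
(the limit exists, so it coincides with the limsup used here). -/
noncomputable def mdim {X : Type*} [MetricSpace X] (T : X → X) : ℝ≥0∞ :=
  ⨆ (ε : ℝ) (_ : 0 < ε), Filter.atTop.limsup fun n : ℕ => widim (dynDist T n) ε / (n : ℝ≥0∞)

/-- The left shift on `ℤ`-indexed sequences. -/
def shift {A : Type*} (x : ℤ → A) : ℤ → A := fun n => x (n + 1)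

lemma hIter_natCast {X : Type*} [TopologicalSpace X] (T : X ≃ₜ X) (k : ℕ) (x : X) :
    hIter T (k : ℤ) x = (⇑T)^[k] x := by simp [hIter]

lemma hIter_neg_natCast {X : Type*} [TopologicalSpace X] (T : X ≃ₜ X) (k : ℕ) (x : X) :
    hIter T (-(k : ℤ)) x = (⇑T.symm)^[k] x := by
  rcases Nat.eq_zero_or_pos k with rfl | hk
  · simp [hIter]
  · have h : ¬ (0 ≤ -(k:ℤ)) := by omega
    simp [hIter, h, hk.ne']

lemma hIter_zero {X : Type*} [TopologicalSpace X] (T : X ≃ₜ X) (x : X) :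
    hIter T 0 x = x := by simp [hIter]

/-- The inductive marker construction: given clopen sets `U_1,…,U_m` covering `Z` with
`U_i ∩ S^k U_i = ∅` for `1 ≤ k ≤ N`, the sets `V_1 = U_1`,
`V_{l+1} = V_l ∪ (U_{l+1} \ ⋃_{i=-N}^{N} S^i V_l)` satisfy, for each `l`:
`V_l ∩ S^k V_l = ∅` for `1 ≤ k ≤ N`, and `U_1 ∪ ⋯ ∪ U_l ⊆ ⋃_{k=-N}^{N} S^k V_l`. -/
theorem stmt4 {Z : Type*} [MetricSpace Z] [CompactSpace Z] [TotallyDisconnectedSpace Z]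
    (S : Z ≃ₜ Z) (hap : ∀ (z : Z) (n : ℕ), 0 < n → (⇑S)^[n] z ≠ z)
    {N : ℕ} (hN : 0 < N) {m : ℕ} (hm : 0 < m)
    (U : Fin m → Set Z) (hUclop : ∀ i, IsClopen (U i)) (hUcov : (⋃ i, U i) = Set.univ)
    (hUdisj : ∀ i, ∀ k : ℕ, 1 ≤ k → k ≤ N → U i ∩ (⇑S)^[k] '' U i = ∅)
    (V : Fin m → Set Z)
    (hV0 : V ⟨0, hm⟩ = U ⟨0, hm⟩)
    (hVrec : ∀ (l : ℕ) (h : l + 1 < m),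
      V ⟨l + 1, h⟩ = V ⟨l, Nat.lt_of_succ_lt h⟩ ∪
        (U ⟨l + 1, h⟩ \
          ⋃ i ∈ Finset.Icc (-(N:ℤ)) (N:ℤ), hIter S i '' V ⟨l, Nat.lt_of_succ_lt h⟩)) :
    ∀ l : Fin m,
      (∀ k : ℕ, 1 ≤ k → k ≤ N → V l ∩ (⇑S)^[k] '' V l = ∅) ∧
      (⋃ i : Fin m, ⋃ (_ : i ≤ l), U i) ⊆
        ⋃ k ∈ Finset.Icc (-(N:ℤ)) (N:ℤ), hIter S k '' V l := by
  rintro ⟨l, hl⟩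
  induction l with
  | zero =>
    have h0 : V ⟨0, hl⟩ = U ⟨0, hl⟩ := hV0
    constructor
    · intro k hk1 hk2
      rw [h0]; exact hUdisj _ k hk1 hk2
    · intro x hx
      simp only [Set.mem_iUnion] at hx
      obtain ⟨i, hi, hxU⟩ := hx
      have hi0 : i = ⟨0, hl⟩ := le_antisymm hi (Fin.mk_le_mk.mpr (Nat.zero_le _))
      subst hi0
      exact Set.mem_iUnion₂.mpr ⟨0, by simp [Finset.mem_Icc],
        ⟨x, h0 ▸ hxU, hIter_zero S x⟩⟩
  | succ l ih =>
    have hl' : l < m := Nat.lt_of_succ_lt hl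
    obtain ⟨ihD, ihC⟩ := ih hl'
    set W := ⋃ i ∈ Finset.Icc (-(N:ℤ)) (N:ℤ), hIter S i '' V ⟨l, hl'⟩ with hW
    have hrec : V ⟨l + 1, hl⟩ = V ⟨l, hl'⟩ ∪ (U ⟨l + 1, hl⟩ \ W) := hVrec l hl
    have hsubW : ∀ (i : ℤ), -(N:ℤ) ≤ i → i ≤ N → ∀ x, hIter S (-i) x ∈ V ⟨l, hl'⟩ → x ∈ W := by
      intro i h1 h2 x hx
      refine Set.mem_iUnion₂.mpr ⟨i, by simp only [Finset.mem_Icc]; omega, hIter S (-i) x, hx, ?_⟩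
      rcases le_or_gt 0 i with h | h
      · obtain ⟨n, rfl⟩ := Int.eq_ofNat_of_zero_le h
        rw [hIter_neg_natCast, hIter_natCast]
        exact Function.LeftInverse.iterate S.apply_symm_apply n x
      · obtain ⟨n, rfl⟩ : ∃ n : ℕ, i = -(n:ℤ) := ⟨i.natAbs, by omega⟩
        rw [neg_neg, hIter_natCast, hIter_neg_natCast]
        exact Function.LeftInverse.iterate S.symm_apply_apply n x
    constructor
    · intro k hk1 hk2
      rw [hrec]
      ext x
      simp only [Set.mem_inter_iff, Set.mem_empty_iff_false, iff_false]
      rintro ⟨hx1, y, hy, rfl⟩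
      have hyx : hIter S (-(k:ℤ)) ((⇑S)^[k] y) = y := by
        rw [hIter_neg_natCast]
        exact Function.LeftInverse.iterate S.symm_apply_apply k y
      rcases hx1 with hx1 | hx1 <;> rcases hy with hy | hy
      · have hmem : (⇑S)^[k] y ∈ V ⟨l, hl'⟩ ∩ (⇑S)^[k] '' V ⟨l, hl'⟩ := ⟨hx1, y, hy, rfl⟩
        rw [ihD k hk1 hk2] at hmem
        exact hmem
      · exact hy.2 (hsubW (-(k:ℤ)) (by omega) (by omega) y
          (by rw [neg_neg, hIter_natCast]; exact hx1))
      · exact hx1.2 (hsubW (k:ℤ) (by omega) (by omega) _ (by rw [hyx]; exact hy))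
      · have hmem : (⇑S)^[k] y ∈ U ⟨l+1, hl⟩ ∩ (⇑S)^[k] '' U ⟨l+1, hl⟩ := ⟨hx1.1, y, hy.1, rfl⟩
        rw [hUdisj ⟨l+1, hl⟩ k hk1 hk2] at hmem
        exact hmem
    · intro x hx
      have hmono : (⋃ k ∈ Finset.Icc (-(N:ℤ)) (N:ℤ), hIter S k '' V ⟨l, hl'⟩) ⊆
          ⋃ k ∈ Finset.Icc (-(N:ℤ)) (N:ℤ), hIter S k '' V ⟨l+1, hl⟩ := by
        refine Set.iUnion₂_mono fun k _ => Set.image_mono ?_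
        rw [hrec]; exact Set.subset_union_left
      simp only [Set.mem_iUnion] at hx
      obtain ⟨i, hi, hxU⟩ := hx
      rcases Nat.lt_or_ge i.val (l+1) with hcase | hcase
      · exact hmono (ihC (Set.mem_iUnion.mpr ⟨i, Set.mem_iUnion.mpr
          ⟨Fin.mk_le_mk.mpr (Nat.lt_succ_iff.mp hcase), hxU⟩⟩))
      · have : i = ⟨l+1, hl⟩ := le_antisymm hi (Fin.mk_le_mk.mpr hcase)
        subst this
        by_cases hxW : x ∈ W
        · exact hmono hxW
        · exact Set.mem_iUnion₂.mpr ⟨0, by simp [Finset.mem_Icc],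
            ⟨x, hrec ▸ Or.inr ⟨hxU, hxW⟩, hIter_zero S x⟩⟩
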